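/- Let T > 0, C ≥ 2 and f ≥ C be real numbers. Then negMulLog((f−1)/T) + negMulLog((f−C+1)/T) > negMulLog(f/T) + negMulLog((f−C)/T). (Equivalently: replacing a segment of frequency f by frequency f−1 and a segment of frequency f−C by frequency f−C+1 strictly increases the sum of the entropy contributions h(s) = −(f(s)/T)·log(f(s)/T), where T = 2nμ is the total number of segment occurrences; this is Lemma 1 of the paper in its normalised form.) -/

import Mathlib

lemma strictConcave_balance {g : ℝ → ℝ} (hg : StrictConcaveOn ℝ (Set.Ici (0:ℝ)) g)
    {a b c d : ℝ} (ha : 0 ≤ a) (hab : a < b) (hbc : b ≤ c) (hcd : c < d)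
    (hsum : a + d = b + c) : g a + g d < g b + g c := by
  have had : a < d := hab.trans_le (hbc.trans_lt hcd).le
  have hd : (0:ℝ) ≤ d := le_of_lt (lt_of_le_of_lt ha had)
  rcases eq_or_lt_of_le hbc with rfl | hbc
  · -- b = c, so b = (a+d)/2
    have hb2 : b = (1/2 : ℝ) • a + (1/2 : ℝ) • d := by
      have : a + d = b + b := hsum
      simp only [smul_eq_mul]
      linarith
    have := hg.2 (Set.mem_Ici.mpr ha) (Set.mem_Ici.mpr hd) had.ne
      (by norm_num : (0:ℝ) < 1/2) (by norm_num : (0:ℝ) < 1/2) (by norm_num)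
    rw [← hb2] at this
    simp only [smul_eq_mul] at this
    linarith
  · set t : ℝ := (d - b) / (d - a) with ht
    set s : ℝ := (b - a) / (d - a) with hs
    have hda : 0 < d - a := by linarith
    have ht0 : 0 < t := div_pos (by linarith) hda
    have hs0 : 0 < s := div_pos (by linarith) hda
    have hts : t + s = 1 := by
      rw [ht, hs, ← add_div, show d - b + (b - a) = d - a by ring,
        div_self hda.ne']
    have htmul : t * (d - a) = d - b := div_mul_cancel₀ _ hda.ne'
    have hsmul : s * (d - a) = b - a := div_mul_cancel₀ _ hda.ne'
    have hb : t • a + (1 - t) • d = b := by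
      simp only [smul_eq_mul]; linarith [htmul]
    have hc : s • a + (1 - s) • d = c := by
      simp only [smul_eq_mul]; linarith [hsmul, hsum]
    have h1 := hg.2 (Set.mem_Ici.mpr ha) (Set.mem_Ici.mpr hd) had.ne ht0
      (by linarith : (0:ℝ) < 1 - t) (by ring)
    have h2 := hg.2 (Set.mem_Ici.mpr ha) (Set.mem_Ici.mpr hd) had.ne hs0
      (by linarith : (0:ℝ) < 1 - s) (by ring)
    rw [hb] at h1; rw [hc] at h2
    have hs' : s = 1 - t := by linarith
    rw [hs'] at h2
    simp only [smul_eq_mul] at h1 h2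
    linarith

/-- Lemma 1 of the paper in normalised form: for `T > 0`, `C ≥ 2` and `f ≥ C`,
replacing a segment of frequency `f` by frequency `f − 1` and a segment of
frequency `f − C` by frequency `f − C + 1` strictly increases the sum of the
entropy contributions `h(s) = negMulLog (f(s)/T)`. -/
theorem negMulLog_balance_gt (T C f : ℝ) (hT : 0 < T) (hC : 2 ≤ C) (hf : C ≤ f) :
    Real.negMulLog (f / T) + Real.negMulLog ((f - C) / T)
      < Real.negMulLog ((f - 1) / T) + Real.negMulLog ((f - C + 1) / T) := by
  have h := strictConcave_balance Real.strictConcaveOn_negMulLog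
    (a := (f - C) / T) (b := (f - C + 1) / T) (c := (f - 1) / T) (d := f / T)
    (div_nonneg (by linarith) hT.le)
    ((div_lt_div_iff_of_pos_right hT).mpr (by linarith))
    ((div_le_div_iff_of_pos_right hT).mpr (by linarith))
    ((div_lt_div_iff_of_pos_right hT).mpr (by linarith))
    (by field_simp; ring)
  linarith
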